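/- Let q be a prime power, let G be a point of PG(2,q), let ℓ₁, …, ℓ_{q+1} be the q+1 lines through G, and let 1 ≤ b ≤ q−1. Let S be the union of ℓ₁, …, ℓ_q together with b points of ℓ_{q+1} \ {G}. Then #S = 1 + q² + b, and every point Q ∈ PG(2,q) \ S lies on exactly C(b+1,2) + q·C(q,2) unordered pairs of distinct points of S collinear with Q; hence S is a (1, C(b+1,2)+q·C(q,2))-OS set. -/

import Mathlib

open Module

/-- Points of `PG(N,q)`: 1-dimensional subspaces of `F^(N+1)`. -/
abbrev PGPoint (F : Type) [Field F] (N : ℕ) :=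
  {W : Submodule F (Fin (N + 1) → F) // Module.finrank F W = 1}

/-- Lines of `PG(N,q)`: 2-dimensional subspaces of `F^(N+1)`. -/
abbrev PGLine (F : Type) [Field F] (N : ℕ) :=
  {W : Submodule F (Fin (N + 1) → F) // Module.finrank F W = 2}

/-- The number of points of `S` lying on the line `L`. -/
noncomputable def lineCount {F : Type} [Field F] {N : ℕ}
    (S : Set (PGPoint F N)) (L : PGLine F N) : ℕ :=
  {P : PGPoint F N | P ∈ S ∧ P.1 ≤ L.1}.ncard

/-- The number of unordered pairs of distinct points of `S` collinear with `Q`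
(the number of secants of `S` through `Q`, counted with multiplicity). -/
noncomputable def pairCount {F : Type} [Field F] {N : ℕ}
    (S : Set (PGPoint F N)) (Q : PGPoint F N) : ℕ :=
  {e : Set (PGPoint F N) |
    ∃ A ∈ S, ∃ B ∈ S, A ≠ B ∧ e = {A, B} ∧ Q.1 ≤ A.1 ⊔ B.1}.ncard

/-- `S` spans (generates) `PG(N,q)`. -/
def Spans {F : Type} [Field F] {N : ℕ} (S : Set (PGPoint F N)) : Prop :=
  (⨆ P ∈ S, P.1) = ⊤

/-- `S` is a `(1,μ)`-saturating set. -/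
def IsSaturating {F : Type} [Field F] {N : ℕ} (S : Set (PGPoint F N)) (μ : ℕ) : Prop :=
  Spans S ∧ S ≠ Set.univ ∧ ∀ Q : PGPoint F N, Q ∉ S → μ ≤ pairCount S Q

/-- `S` is an optimal `(1,μ)`-saturating set (`(1,μ)`-OS set). -/
def IsOS {F : Type} [Field F] {N : ℕ} (S : Set (PGPoint F N)) (μ : ℕ) : Prop :=
  Spans S ∧ S ≠ Set.univ ∧ ∀ Q : PGPoint F N, Q ∉ S → pairCount S Q = μ

/-- `S` is a minimal `(1,μ)`-saturating set: no proper subset is `(1,μ)`-saturating. -/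
def IsMinimalSaturating {F : Type} [Field F] {N : ℕ} (S : Set (PGPoint F N)) (μ : ℕ) : Prop :=
  IsSaturating S μ ∧ ∀ T : Set (PGPoint F N), T ⊂ S → ¬ IsSaturating T μ


set_option linter.unusedSectionVars false
set_option maxHeartbeats 1000000

open Module Submodule

namespace Stmt18Aux

variable {F : Type} [Field F] [Fintype F]

section Generic

variable {V : Type} [AddCommGroup V] [Module F V] [FiniteDimensional F V]

lemma pt_le_pt {P Q : Submodule F V} (h1 : finrank F P = 1) (h2 : finrank F Q = 1)
    (h : P ≤ Q) : P = Q :=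
  Submodule.eq_of_le_of_finrank_eq h (h1.trans h2.symm)

lemma pt_ne_bot {P : Submodule F V} (h1 : finrank F P = 1) : P ≠ ⊥ := by
  intro h
  rw [h, finrank_bot] at h1
  omega

lemma finrank_pos_of_ne_bot {P : Submodule F V} (h : P ≠ ⊥) : 0 < finrank F P :=
  finrank_pos_iff.2 (Submodule.nontrivial_iff_ne_bot.2 h)

lemma inf_pts_eq_bot {P Q : Submodule F V} (h1 : finrank F P = 1) (h2 : finrank F Q = 1)
    (hne : P ≠ Q) : P ⊓ Q = ⊥ := by
  by_contra h
  have h3 : 0 < finrank F (P ⊓ Q : Submodule F V) := finrank_pos_of_ne_bot h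
  have h4 : finrank F (P ⊓ Q : Submodule F V) ≤ 1 := h1 ▸ Submodule.finrank_mono inf_le_left
  have h5 : finrank F (P ⊓ Q : Submodule F V) = 1 := le_antisymm h4 h3
  have e1 := pt_le_pt h5 h1 inf_le_left
  have e2 := pt_le_pt h5 h2 inf_le_right
  exact hne (e1.symm.trans e2)

lemma finrank_sup_pts {P Q : Submodule F V} (h1 : finrank F P = 1) (h2 : finrank F Q = 1)
    (hne : P ≠ Q) : finrank F (P ⊔ Q : Submodule F V) = 2 := by
  have h := Submodule.finrank_sup_add_finrank_inf_eq P Q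
  rw [inf_pts_eq_bot h1 h2 hne, finrank_bot, h1, h2] at h
  omega

lemma sup_pts_eq_line {P Q L : Submodule F V} (h1 : finrank F P = 1) (h2 : finrank F Q = 1)
    (hL : finrank F L = 2) (hne : P ≠ Q) (hPL : P ≤ L) (hQL : Q ≤ L) : P ⊔ Q = L :=
  Submodule.eq_of_le_of_finrank_eq (sup_le hPL hQL) ((finrank_sup_pts h1 h2 hne).trans hL.symm)

lemma line_sup_eq_top (hV : finrank F V = 3) {L M : Submodule F V}
    (hL : finrank F L = 2) (hM : finrank F M = 2) (hne : L ≠ M) : L ⊔ M = ⊤ := by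
  have hlt : L < L ⊔ M := by
    rcases lt_or_eq_of_le (le_sup_left : L ≤ L ⊔ M) with h | h
    · exact h
    · exfalso
      have : M ≤ L := by rw [h]; exact le_sup_right
      exact hne ((Submodule.eq_of_le_of_finrank_eq this (hM.trans hL.symm)).symm)
  have h2 : 2 < finrank F (L ⊔ M : Submodule F V) := hL ▸ Submodule.finrank_lt_finrank_of_lt hlt
  have h3 : finrank F (L ⊔ M : Submodule F V) ≤ 3 := hV ▸ Submodule.finrank_le _
  exact Submodule.eq_top_of_finrank_eq (by omega)

lemma line_inf_pt (hV : finrank F V = 3) {L M : Submodule F V}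
    (hL : finrank F L = 2) (hM : finrank F M = 2) (hne : L ≠ M) :
    finrank F (L ⊓ M : Submodule F V) = 1 := by
  have h := Submodule.finrank_sup_add_finrank_inf_eq L M
  rw [line_sup_eq_top hV hL hM hne, finrank_top, hV, hL, hM] at h
  omega

end Generic

section Counting

variable {V : Type} [AddCommGroup V] [Module F V] [FiniteDimensional F V] [Fintype V]

lemma card_pts_mul (W : Submodule F V) :
    {P : Submodule F V | finrank F P = 1 ∧ P ≤ W}.ncard * (Fintype.card F - 1)
      = Fintype.card F ^ finrank F W - 1 := by
  classical
  haveI : Finite (Submodule F V) :=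
    Finite.of_injective (fun W => (W : Set V)) SetLike.coe_injective
  set s : Finset V := (Finset.univ.filter (· ∈ W)).erase 0 with hs
  have hmemW : ∀ U : Submodule F V, (Finset.univ.filter (· ∈ U)).card = Fintype.card F ^ finrank F U := by
    intro U
    rw [← Fintype.card_subtype, card_eq_pow_finrank (K := F)]
  have hscard : s.card = Fintype.card F ^ finrank F W - 1 := by
    rw [hs, Finset.card_erase_of_mem (by simp [W.zero_mem]), hmemW]
  set t : Finset (Submodule F V) :=
    (Set.toFinite {P : Submodule F V | finrank F P = 1 ∧ P ≤ W}).toFinset with ht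
  have hmem : ∀ v ∈ s, span F {v} ∈ t := by
    intro v hv
    rw [hs, Finset.mem_erase, Finset.mem_filter] at hv
    rw [ht, Set.Finite.mem_toFinset]
    exact ⟨finrank_span_singleton hv.1, (span_singleton_le_iff_mem _ _).2 hv.2.2⟩
  have hcard := Finset.card_eq_sum_card_fiberwise hmem
  have hfiber : ∀ P ∈ t, (s.filter (fun v => span F {v} = P)).card = Fintype.card F - 1 := by
    intro P hP
    rw [ht, Set.Finite.mem_toFinset] at hP
    obtain ⟨hP1, hPW⟩ := hP
    have heq : s.filter (fun v => span F {v} = P) = (Finset.univ.filter (· ∈ P)).erase 0 := by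
      ext v
      rw [Finset.mem_filter, hs, Finset.mem_erase, Finset.mem_filter, Finset.mem_erase,
        Finset.mem_filter]
      constructor
      · rintro ⟨⟨hv0, -, hvW⟩, hsp⟩
        exact ⟨hv0, Finset.mem_univ v, hsp ▸ mem_span_singleton_self v⟩
      · rintro ⟨hv0, -, hvP⟩
        refine ⟨⟨hv0, Finset.mem_univ v, hPW hvP⟩, ?_⟩
        exact pt_le_pt (finrank_span_singleton hv0) hP1 ((span_singleton_le_iff_mem _ _).2 hvP)
    rw [heq, Finset.card_erase_of_mem (by simp [P.zero_mem]), hmemW, hP1, pow_one]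
  rw [Finset.sum_congr rfl hfiber, Finset.sum_const, smul_eq_mul] at hcard
  rw [Set.ncard_eq_toFinset_card _ (Set.toFinite _)]
  rw [hscard] at hcard
  exact hcard.symm

lemma ncard_pts_of_finrank (W : Submodule F V) {r n : ℕ} (hW : finrank F W = r)
    (hq2 : 2 ≤ Fintype.card F)
    (hn : (n * (Fintype.card F - 1) + 1) = Fintype.card F ^ r) :
    {P : Submodule F V | finrank F P = 1 ∧ P ≤ W}.ncard = n := by
  have h := card_pts_mul W
  rw [hW] at h
  have h2 : n * (Fintype.card F - 1) = Fintype.card F ^ r - 1 := by omega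
  rw [← h2] at h
  exact Nat.eq_of_mul_eq_mul_right (by omega) h

lemma ncard_pts_line (W : Submodule F V) (hW : finrank F W = 2)
    (hq2 : 2 ≤ Fintype.card F) :
    {P : Submodule F V | finrank F P = 1 ∧ P ≤ W}.ncard = Fintype.card F + 1 := by
  refine ncard_pts_of_finrank W hW hq2 ?_
  obtain ⟨m, hm⟩ : ∃ m, Fintype.card F = m + 2 :=
    ⟨Fintype.card F - 2, by omega⟩
  rw [hm, show m + 2 - 1 = m + 1 from rfl]
  ring

lemma ncard_pts_top (W : Submodule F V) (hW : finrank F W = 3)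
    (hq2 : 2 ≤ Fintype.card F) :
    {P : Submodule F V | finrank F P = 1 ∧ P ≤ W}.ncard
      = Fintype.card F ^ 2 + Fintype.card F + 1 := by
  refine ncard_pts_of_finrank W hW hq2 ?_
  obtain ⟨m, hm⟩ : ∃ m, Fintype.card F = m + 2 :=
    ⟨Fintype.card F - 2, by omega⟩
  rw [hm, show m + 2 - 1 = m + 1 from rfl]
  ring

end Counting

lemma pairset_ncard {α : Type} [Finite α] (t : Set α) :
    {e : Set α | ∃ A ∈ t, ∃ B ∈ t, A ≠ B ∧ e = {A, B}}.ncard = Nat.choose t.ncard 2 := by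
  classical
  haveI := Fintype.ofFinite α
  have himg : {e : Set α | ∃ A ∈ t, ∃ B ∈ t, A ≠ B ∧ e = {A, B}}
      = (fun u : Finset α => (↑u : Set α)) '' ↑(t.toFinset.powersetCard 2) := by
    ext e
    simp only [Set.mem_setOf_eq, Set.mem_image, Finset.mem_coe, Finset.mem_powersetCard]
    constructor
    · rintro ⟨A, hA, B, hB, hAB, rfl⟩
      refine ⟨{A, B}, ⟨?_, ?_⟩, by simp⟩
      · intro x hx
        rw [Finset.mem_insert, Finset.mem_singleton] at hx
        rcases hx with rfl | rfl <;> simpa [Set.mem_toFinset]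
      · rw [Finset.card_insert_of_notMem (by simpa using hAB), Finset.card_singleton]
    · rintro ⟨u, ⟨hsub, hcard⟩, rfl⟩
      obtain ⟨A, B, hAB, rfl⟩ := Finset.card_eq_two.mp hcard
      refine ⟨A, ?_, B, ?_, hAB, by simp⟩
      · have := hsub (Finset.mem_insert_self A {B})
        rwa [Set.mem_toFinset] at this
      · have := hsub (Finset.mem_insert_of_mem (Finset.mem_singleton_self B))
        rwa [Set.mem_toFinset] at this
  rw [himg, Set.ncard_image_of_injective _ (fun u v h => Finset.coe_injective h),
    Set.ncard_coe_finset, Finset.card_powersetCard, Set.ncard_eq_toFinset_card']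

section PG

variable {F : Type} [Field F] [Fintype F]

instance pgSubmoduleFinite {N : ℕ} : Finite (Submodule F (Fin (N + 1) → F)) :=
  Finite.of_injective (fun W => (W : Set (Fin (N + 1) → F))) SetLike.coe_injective

lemma ncard_subtype {α : Type} (p : α → Prop) (T : Set α) :
    {x : Subtype p | x.1 ∈ T}.ncard = {y : α | p y ∧ y ∈ T}.ncard := by
  rw [← Set.ncard_image_of_injective _ (Subtype.val_injective (p := p))]
  congr 1
  ext y
  simp only [Set.mem_image, Set.mem_setOf_eq]
  constructor
  · rintro ⟨⟨x, hx⟩, hmem, rfl⟩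
    exact ⟨hx, hmem⟩
  · rintro ⟨hy, hmem⟩
    exact ⟨⟨y, hy⟩, hmem, rfl⟩

lemma hV3 : finrank F (Fin 3 → F) = 3 := by simp

lemma ncard_pgpts_line (hq2 : 2 ≤ Fintype.card F) (L : Submodule F (Fin 3 → F))
    (hL : finrank F L = 2) :
    {P : PGPoint F 2 | P.1 ≤ L}.ncard = Fintype.card F + 1 :=
  (ncard_subtype (fun y : Submodule F (Fin 3 → F) => finrank F y = 1) {y | y ≤ L}).trans
    (ncard_pts_line L hL hq2)

lemma ncard_pgpts_univ (hq2 : 2 ≤ Fintype.card F) :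
    (Set.univ : Set (PGPoint F 2)).ncard
      = Fintype.card F ^ 2 + Fintype.card F + 1 := by
  have h1 : (Set.univ : Set (PGPoint F 2)) = {P : PGPoint F 2 | P.1 ≤ ⊤} := by
    ext P; simp
  rw [h1]
  exact (ncard_subtype (fun y : Submodule F (Fin 3 → F) => finrank F y = 1) {y | y ≤ ⊤}).trans
    (ncard_pts_top ⊤ (by rw [finrank_top]; exact hV3) hq2)

lemma ncard_lines_through (hq2 : 2 ≤ Fintype.card F) (Q : PGPoint F 2) :
    {L : PGLine F 2 | Q.1 ≤ L.1}.ncard = Fintype.card F + 1 := by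
  obtain ⟨M, hM⟩ := Submodule.exists_isCompl Q.1
  have hMr : finrank F M = 2 := by
    have h := Submodule.finrank_add_eq_of_isCompl hM
    rw [Q.2, hV3] at h
    omega
  have hQM : ¬ Q.1 ≤ M := by
    intro h
    have h2 : Q.1 ≤ Q.1 ⊓ M := le_inf le_rfl h
    rw [hM.inf_eq_bot] at h2
    exact pt_ne_bot Q.2 (le_bot_iff.mp h2)
  have key : ∀ P : Submodule F (Fin 3 → F), finrank F P = 1 → P ≤ M →
      (Q.1 ⊔ P) ⊓ M = P := by
    intro P hP1 hPM
    have hQP : Q.1 ≠ P := fun h => hQM (h ▸ hPM)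
    have hsup : finrank F (Q.1 ⊔ P : Submodule F (Fin 3 → F)) = 2 :=
      finrank_sup_pts Q.2 hP1 hQP
    have hle : P ≤ (Q.1 ⊔ P) ⊓ M := le_inf le_sup_right hPM
    have hge1 : 1 ≤ finrank F ((Q.1 ⊔ P) ⊓ M : Submodule F (Fin 3 → F)) :=
      le_trans hP1.ge (Submodule.finrank_mono hle)
    have hle2 : finrank F ((Q.1 ⊔ P) ⊓ M : Submodule F (Fin 3 → F)) ≤ 2 :=
      le_trans (Submodule.finrank_mono inf_le_left) hsup.le
    have hne2 : finrank F ((Q.1 ⊔ P) ⊓ M : Submodule F (Fin 3 → F)) ≠ 2 := by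
      intro h
      have heq := Submodule.eq_of_le_of_finrank_eq
        (inf_le_left : (Q.1 ⊔ P) ⊓ M ≤ Q.1 ⊔ P) (h.trans hsup.symm)
      have : Q.1 ≤ M := le_trans le_sup_left (heq ▸ inf_le_right)
      exact hQM this
    exact (pt_le_pt hP1 (by omega) hle).symm
  have h1 : {L : PGLine F 2 | Q.1 ≤ L.1}.ncard
      = {y : Submodule F (Fin 3 → F) | finrank F y = 2 ∧ Q.1 ≤ y}.ncard :=
    ncard_subtype (fun y : Submodule F (Fin 3 → F) => finrank F y = 2) {y | Q.1 ≤ y}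
  have himg : {y : Submodule F (Fin 3 → F) | finrank F y = 2 ∧ Q.1 ≤ y}
      = (fun P => Q.1 ⊔ P) '' {P : Submodule F (Fin 3 → F) | finrank F P = 1 ∧ P ≤ M} := by
    ext y
    simp only [Set.mem_setOf_eq, Set.mem_image]
    constructor
    · rintro ⟨hy2, hQy⟩
      have hyM : y ≠ M := fun h => hQM (h ▸ hQy)
      have hP1 : finrank F (y ⊓ M : Submodule F (Fin 3 → F)) = 1 :=
        line_inf_pt hV3 hy2 hMr hyM
      refine ⟨y ⊓ M, ⟨hP1, inf_le_right⟩, ?_⟩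
      have hQP : Q.1 ≠ y ⊓ M := fun h => hQM (h ▸ inf_le_right)
      exact Submodule.eq_of_le_of_finrank_eq (sup_le hQy inf_le_left)
        ((finrank_sup_pts Q.2 hP1 hQP).trans hy2.symm)
    · rintro ⟨P, ⟨hP1, hPM⟩, rfl⟩
      have hQP : Q.1 ≠ P := fun h => hQM (h ▸ hPM)
      exact ⟨finrank_sup_pts Q.2 hP1 hQP, le_sup_left⟩
  have hinj : Set.InjOn (fun P => Q.1 ⊔ P)
      {P : Submodule F (Fin 3 → F) | finrank F P = 1 ∧ P ≤ M} := by
    rintro P ⟨hP1, hPM⟩ P' ⟨hP1', hPM'⟩ h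
    simp only at h
    rw [← key P hP1 hPM, ← key P' hP1' hPM', h]
  rw [h1, himg, Set.ncard_image_of_injOn hinj, ncard_pts_line M hMr hq2]

lemma pairCount_eq_sum (S : Set (PGPoint F 2)) (Q : PGPoint F 2) :
    pairCount S Q =
      ∑ L ∈ (Set.toFinite {L : PGLine F 2 | Q.1 ≤ L.1}).toFinset,
        Nat.choose (lineCount S L) 2 := by
  classical
  have hmemiff : ∀ e : Set (PGPoint F 2),
      (e ∈ {e : Set (PGPoint F 2) |
        ∃ A ∈ S, ∃ B ∈ S, A ≠ B ∧ e = {A, B} ∧ Q.1 ≤ A.1 ⊔ B.1})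
      ↔ ∃ L : PGLine F 2, Q.1 ≤ L.1 ∧
          e ∈ {e : Set (PGPoint F 2) | ∃ A ∈ {P : PGPoint F 2 | P ∈ S ∧ P.1 ≤ L.1},
            ∃ B ∈ {P : PGPoint F 2 | P ∈ S ∧ P.1 ≤ L.1}, A ≠ B ∧ e = {A, B}} := by
    intro e
    constructor
    · rintro ⟨A, hA, B, hB, hAB, rfl, hQs⟩
      have hne : A.1 ≠ B.1 := fun h => hAB (Subtype.ext h)
      exact ⟨⟨A.1 ⊔ B.1, finrank_sup_pts A.2 B.2 hne⟩, hQs, A, ⟨hA, le_sup_left⟩,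
        B, ⟨hB, le_sup_right⟩, hAB, rfl⟩
    · rintro ⟨L, hQL, A, ⟨hA, hAL⟩, B, ⟨hB, hBL⟩, hAB, rfl⟩
      have hne : A.1 ≠ B.1 := fun h => hAB (Subtype.ext h)
      refine ⟨A, hA, B, hB, hAB, rfl, ?_⟩
      rw [sup_pts_eq_line A.2 B.2 L.2 hne hAL hBL]
      exact hQL
  rw [pairCount, Set.ncard_eq_toFinset_card _ (Set.toFinite _)]
  have hdisj : ∀ L ∈ (Set.toFinite {L : PGLine F 2 | Q.1 ≤ L.1}).toFinset,
      ∀ L' ∈ (Set.toFinite {L : PGLine F 2 | Q.1 ≤ L.1}).toFinset, L ≠ L' →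
      Disjoint
        ((Set.toFinite {e : Set (PGPoint F 2) |
          ∃ A ∈ {P : PGPoint F 2 | P ∈ S ∧ P.1 ≤ L.1},
          ∃ B ∈ {P : PGPoint F 2 | P ∈ S ∧ P.1 ≤ L.1}, A ≠ B ∧ e = {A, B}}).toFinset)
        ((Set.toFinite {e : Set (PGPoint F 2) |
          ∃ A ∈ {P : PGPoint F 2 | P ∈ S ∧ P.1 ≤ L'.1},
          ∃ B ∈ {P : PGPoint F 2 | P ∈ S ∧ P.1 ≤ L'.1}, A ≠ B ∧ e = {A, B}}).toFinset) := by
    intro L _ L' _ hne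
    rw [Finset.disjoint_left]
    intro e he he'
    rw [Set.Finite.mem_toFinset] at he he'
    obtain ⟨A, ⟨hA, hAL⟩, B, ⟨hB, hBL⟩, hAB, rfl⟩ := he
    obtain ⟨A', ⟨hA', hAL'⟩, B', ⟨hB', hBL'⟩, hAB', heq⟩ := he'
    have hAm : A ∈ ({A', B'} : Set (PGPoint F 2)) := by
      rw [← heq]; exact Set.mem_insert _ _
    have hBm : B ∈ ({A', B'} : Set (PGPoint F 2)) := by
      rw [← heq]; exact Set.mem_insert_of_mem _ rfl
    have hAle : A.1 ≤ L'.1 := by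
      rcases hAm with h | h
      · rw [h]; exact hAL'
      · rw [Set.mem_singleton_iff.mp h]; exact hBL'
    have hBle : B.1 ≤ L'.1 := by
      rcases hBm with h | h
      · rw [h]; exact hAL'
      · rw [Set.mem_singleton_iff.mp h]; exact hBL'
    have hne1 : A.1 ≠ B.1 := fun h => hAB (Subtype.ext h)
    have e1 := sup_pts_eq_line A.2 B.2 L.2 hne1 hAL hBL
    have e2 := sup_pts_eq_line A.2 B.2 L'.2 hne1 hAle hBle
    exact hne (Subtype.ext (e1.symm.trans e2))
  have hbiUnion : (Set.toFinite {e : Set (PGPoint F 2) |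
        ∃ A ∈ S, ∃ B ∈ S, A ≠ B ∧ e = {A, B} ∧ Q.1 ≤ A.1 ⊔ B.1}).toFinset
      = ((Set.toFinite {L : PGLine F 2 | Q.1 ≤ L.1}).toFinset).biUnion
          (fun L => (Set.toFinite {e : Set (PGPoint F 2) |
            ∃ A ∈ {P : PGPoint F 2 | P ∈ S ∧ P.1 ≤ L.1},
            ∃ B ∈ {P : PGPoint F 2 | P ∈ S ∧ P.1 ≤ L.1}, A ≠ B ∧ e = {A, B}}).toFinset) := by
    ext e
    simp only [Set.Finite.mem_toFinset, Finset.mem_biUnion, Set.mem_setOf_eq]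
    exact (hmemiff e).trans (by
      constructor
      · rintro ⟨L, h1, h2⟩
        exact ⟨L, h1, h2⟩
      · rintro ⟨L, h1, h2⟩
        exact ⟨L, h1, h2⟩)
  rw [hbiUnion, Finset.card_biUnion hdisj]
  refine Finset.sum_congr rfl ?_
  intro L _
  rw [← Set.ncard_eq_toFinset_card _ (Set.toFinite _)]
  exact pairset_ncard {P : PGPoint F 2 | P ∈ S ∧ P.1 ≤ L.1}

end PG

end Stmt18Aux


open Stmt18Aux

/-- Let `G` be a point of `PG(2,q)`, `ℓ*` one of the `q+1`
lines through `G`, and `1 ≤ b ≤ q−1`. Let `S` be the union of the `q` lines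
through `G` other than `ℓ*` together with `b` points of `ℓ* \ {G}`. Then
`#S = 1 + q² + b`, and every point `Q ∉ S` lies on exactly
`C(b+1,2) + q·C(q,2)` unordered pairs of distinct points of `S` collinear with
`Q`; hence `S` is a `(1, C(b+1,2)+q·C(q,2))`-OS set. -/
theorem stmt_18 (F : Type) [Field F] [Fintype F] (q b : ℕ)
    (hq : Fintype.card F = q) (hb1 : 1 ≤ b) (hbq : b ≤ q - 1)
    (G : PGPoint F 2) (lstar : PGLine F 2) (hGl : G.1 ≤ lstar.1)
    (B : Set (PGPoint F 2)) (hB : ∀ P ∈ B, P.1 ≤ lstar.1 ∧ P ≠ G)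
    (hBcard : B.ncard = b)
    (S : Set (PGPoint F 2))
    (hS : S = {P : PGPoint F 2 |
      ∃ m : PGLine F 2, G.1 ≤ m.1 ∧ m ≠ lstar ∧ P.1 ≤ m.1} ∪ B) :
    S.ncard = 1 + q ^ 2 + b ∧
    (∀ Q : PGPoint F 2, Q ∉ S →
      pairCount S Q = Nat.choose (b + 1) 2 + q * Nat.choose q 2) ∧
    IsOS S (Nat.choose (b + 1) 2 + q * Nat.choose q 2) := by
  classical
  subst hq
  have hq2 : 2 ≤ Fintype.card F := Fintype.one_lt_card
  have hV : finrank F (Fin 3 → F) = 3 := hV3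
  -- G is in S
  have hGS : G ∈ S := by
    rw [hS]
    left
    have hcard : ({lstar} : Set (PGLine F 2)).ncard < {L : PGLine F 2 | G.1 ≤ L.1}.ncard := by
      rw [Set.ncard_singleton, ncard_lines_through hq2 G]
      omega
    obtain ⟨m, hm1, hm2⟩ :=
      Set.exists_mem_notMem_of_ncard_lt_ncard hcard (Set.finite_singleton _)
    exact ⟨m, hm1, by simpa using hm2, hm1⟩
  -- intersection of a line through G with lstar
  have hGinf : ∀ m : PGLine F 2, G.1 ≤ m.1 → m ≠ lstar → m.1 ⊓ lstar.1 = G.1 := by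
    intro m h1 h2
    have hne : m.1 ≠ lstar.1 := fun h => h2 (Subtype.ext h)
    exact (pt_le_pt G.2 (line_inf_pt hV m.2 lstar.2 hne) (le_inf h1 hGl)).symm
  -- points of S on lstar
  have hSl : ∀ P : PGPoint F 2, P ∈ S → P.1 ≤ lstar.1 → P = G ∨ P ∈ B := by
    intro P hP hPl
    rw [hS] at hP
    rcases hP with ⟨m, hm1, hm2, hm3⟩ | hPB
    · left
      have hle : P.1 ≤ G.1 := by
        rw [← hGinf m hm1 hm2]
        exact le_inf hm3 hPl
      exact Subtype.ext (pt_le_pt P.2 G.2 hle)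
    · right; exact hPB
  -- points off lstar are in S
  have hoff : ∀ P : PGPoint F 2, ¬ P.1 ≤ lstar.1 → P ∈ S := by
    intro P hP
    rw [hS]; left
    have hPG : P.1 ≠ G.1 := fun h => hP (h ▸ hGl)
    refine ⟨⟨G.1 ⊔ P.1, finrank_sup_pts G.2 P.2 (Ne.symm hPG)⟩, le_sup_left, ?_, le_sup_right⟩
    intro h
    apply hP
    have h2 : G.1 ⊔ P.1 = lstar.1 := congrArg Subtype.val h
    rw [← h2]
    exact le_sup_right
  -- decomposition of S
  have hSeq : S = {P : PGPoint F 2 | ¬ P.1 ≤ lstar.1} ∪ insert G B := by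
    ext P
    constructor
    · intro hP
      by_cases h : P.1 ≤ lstar.1
      · right
        rcases hSl P hP h with h1 | h1
        · rw [h1]; exact Set.mem_insert _ _
        · exact Set.mem_insert_of_mem _ h1
      · left; exact h
    · intro hP
      rcases hP with h | h
      · exact hoff P h
      · rcases Set.mem_insert_iff.mp h with rfl | h1
        · exact hGS
        · rw [hS]; right; exact h1
  -- cardinalities
  have hGB : (insert G B).ncard = b + 1 := by
    rw [Set.ncard_insert_of_notMem (fun h => (hB G h).2 rfl) (Set.toFinite B), hBcard]
  have hoffcard : {P : PGPoint F 2 | ¬ P.1 ≤ lstar.1}.ncard = Fintype.card F ^ 2 := by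
    have h1 : {P : PGPoint F 2 | ¬ P.1 ≤ lstar.1}
        = Set.univ \ {P : PGPoint F 2 | P.1 ≤ lstar.1} := by
      ext P; simp
    rw [h1, Set.ncard_diff (Set.subset_univ _) (Set.toFinite _),
      ncard_pgpts_univ hq2, ncard_pgpts_line hq2 lstar.1 lstar.2]
    omega
  have hScard : S.ncard = 1 + Fintype.card F ^ 2 + b := by
    have hdisj : Disjoint {P : PGPoint F 2 | ¬ P.1 ≤ lstar.1} (insert G B) := by
      rw [Set.disjoint_left]
      intro P hP hP2
      rcases Set.mem_insert_iff.mp hP2 with rfl | h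
      · exact hP hGl
      · exact hP (hB P h).1
    rw [hSeq, Set.ncard_union_eq hdisj (Set.toFinite _) (Set.toFinite _), hoffcard, hGB]
    omega
  -- points not in S
  have hQl : ∀ Q : PGPoint F 2, Q ∉ S → Q.1 ≤ lstar.1 ∧ Q ≠ G ∧ Q ∉ B := by
    intro Q hQ
    have hQG : Q ≠ G := fun h => hQ (h ▸ hGS)
    have hQB : Q ∉ B := fun h => hQ (by rw [hS]; exact Set.mem_union_right _ h)
    refine ⟨?_, hQG, hQB⟩
    by_contra h
    exact hQ (hoff Q h)
  -- lineCount on lstar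
  have hLl : lineCount S lstar = b + 1 := by
    have h1 : {P : PGPoint F 2 | P ∈ S ∧ P.1 ≤ lstar.1} = insert G B := by
      ext P
      constructor
      · rintro ⟨h1, h2⟩
        rcases hSl P h1 h2 with rfl | h
        · exact Set.mem_insert _ _
        · exact Set.mem_insert_of_mem _ h
      · intro h
        rcases Set.mem_insert_iff.mp h with rfl | h
        · exact ⟨hGS, hGl⟩
        · exact ⟨by rw [hS]; exact Set.mem_union_right _ h, (hB P h).1⟩
    rw [lineCount, h1, hGB]
  -- lineCount on other lines through an external point
  have hLm : ∀ Q : PGPoint F 2, Q ∉ S → ∀ m : PGLine F 2, Q.1 ≤ m.1 → m ≠ lstar →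
      lineCount S m = Fintype.card F := by
    intro Q hQ m hQm hml
    obtain ⟨hQlstar, hQG, hQB⟩ := hQl Q hQ
    have hinf : m.1 ⊓ lstar.1 = Q.1 := by
      have hne : m.1 ≠ lstar.1 := fun h => hml (Subtype.ext h)
      exact (pt_le_pt Q.2 (line_inf_pt hV m.2 lstar.2 hne) (le_inf hQm hQlstar)).symm
    have h1 : {P : PGPoint F 2 | P ∈ S ∧ P.1 ≤ m.1}
        = {P : PGPoint F 2 | P.1 ≤ m.1} \ {Q} := by
      ext P
      constructor
      · rintro ⟨h1, h2⟩
        refine ⟨h2, fun h => ?_⟩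
        rw [Set.mem_singleton_iff.mp h] at h1
        exact hQ h1
      · rintro ⟨h1, h2⟩
        refine ⟨?_, h1⟩
        by_cases hPl : P.1 ≤ lstar.1
        · exfalso
          apply h2
          have hle : P.1 ≤ Q.1 := by
            rw [← hinf]
            exact le_inf h1 hPl
          exact Set.mem_singleton_iff.mpr (Subtype.ext (pt_le_pt P.2 Q.2 hle))
        · exact hoff P hPl
    have hQmem : Q ∈ {P : PGPoint F 2 | P.1 ≤ m.1} := hQm
    rw [lineCount, h1, Set.ncard_diff_singleton_of_mem hQmem,
      ncard_pgpts_line hq2 m.1 m.2]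
    omega
  -- the pair count
  have hpair : ∀ Q : PGPoint F 2, Q ∉ S →
      pairCount S Q = Nat.choose (b + 1) 2
        + Fintype.card F * Nat.choose (Fintype.card F) 2 := by
    intro Q hQ
    obtain ⟨hQlstar, hQG, hQB⟩ := hQl Q hQ
    rw [pairCount_eq_sum S Q]
    have hlmem : lstar ∈ (Set.toFinite {L : PGLine F 2 | Q.1 ≤ L.1}).toFinset := by
      rw [Set.Finite.mem_toFinset]
      exact hQlstar
    rw [← Finset.sum_erase_add _ _ hlmem, hLl]
    have hconst : ∀ L ∈ ((Set.toFinite {L : PGLine F 2 | Q.1 ≤ L.1}).toFinset).erase lstar,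
        Nat.choose (lineCount S L) 2 = Nat.choose (Fintype.card F) 2 := by
      intro L hL
      rw [Finset.mem_erase, Set.Finite.mem_toFinset] at hL
      rw [hLm Q hQ L hL.2 hL.1]
    rw [Finset.sum_congr rfl hconst, Finset.sum_const, smul_eq_mul,
      Finset.card_erase_of_mem hlmem,
      ← Set.ncard_eq_toFinset_card _ (Set.toFinite _), ncard_lines_through hq2 Q,
      Nat.add_sub_cancel]
    exact Nat.add_comm _ _
  -- spanning
  have hspan : Spans S := by
    rw [Spans, eq_top_iff]
    intro v _
    have hmem : ∀ w : Fin 3 → F, w ∉ lstar.1 → w ∈ ⨆ P ∈ S, P.1 := by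
      intro w hw
      have hw0 : w ≠ 0 := fun h => hw (by rw [h]; exact lstar.1.zero_mem)
      have hP : (⟨span F {w}, finrank_span_singleton hw0⟩ : PGPoint F 2) ∈ S := by
        apply hoff
        intro h
        exact hw (h (mem_span_singleton_self w))
      have hle := le_iSup₂ (f := fun (P : PGPoint F 2) (_ : P ∈ S) => P.1) _ hP
      exact hle (mem_span_singleton_self w)
    by_cases hv : v ∈ lstar.1
    · obtain ⟨w, hw⟩ : ∃ w, w ∉ lstar.1 := by
        by_contra h
        push_neg at h
        have htop : lstar.1 = ⊤ := eq_top_iff'.mpr h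
        have h2 := lstar.2
        rw [htop, finrank_top, hV] at h2
        omega
      have h1 : v + w ∉ lstar.1 := fun h => hw (by simpa using lstar.1.sub_mem h hv)
      have h2 := Submodule.sub_mem _ (hmem _ h1) (hmem _ hw)
      simpa using h2
    · exact hmem v hv
  -- not everything
  have hne_univ : S ≠ Set.univ := by
    have hcard : (insert G B).ncard < {P : PGPoint F 2 | P.1 ≤ lstar.1}.ncard := by
      rw [hGB, ncard_pgpts_line hq2 lstar.1 lstar.2]
      omega
    obtain ⟨Q, hQ1, hQ2⟩ := Set.exists_mem_notMem_of_ncard_lt_ncard hcard (Set.toFinite _)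
    intro h
    apply hQ2
    rcases hSl Q (by rw [h]; exact Set.mem_univ Q) hQ1 with rfl | hQB
    · exact Set.mem_insert _ _
    · exact Set.mem_insert_of_mem _ hQB
  exact ⟨hScard, fun Q hQ => hpair Q hQ, hspan, hne_univ, fun Q hQ => hpair Q hQ⟩
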